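/- In a one-sided matching problem with three agents, the mechanism that selects, among all efficient matchings at a profile, the one minimizing a fixed injective index R into the natural numbers, is efficient but not group strategy-proof. Specifically, with R assigning values 1,2,3,4 to {(1,2),(3)}, {(1),(2,3)}, {(1,3),(2)}, {(1),(2),(3)} respectively, at the profile where every agent ranks 3 ≻ 1 ≻ 2 agent 2 can strictly gain by misreporting 3 ≻ 2 ≻ 1. -/

import Mathlib

/- One-sided matching framework.
Agents: a type `A`.  A matching is an involution `μ : A → A` (a fixed point is a
single agent).  Each agent `i` has a strict total order over `A`, where `i` itself
represents staying single. -/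

abbrev Pref (A : Type) := {r : A → A → Prop // IsStrictTotalOrder A r}
abbrev Profile (A : Type) := A → Pref A
abbrev Matching (A : Type) := {μ : A → A // Function.Involutive μ}

/-- `μ` Pareto dominates `η` at profile `P`. -/
def dominates {A : Type} (P : Profile A) (μ η : A → A) : Prop :=
  (∀ i, μ i = η i ∨ (P i).1 (μ i) (η i)) ∧ ∃ i, (P i).1 (μ i) (η i)

/-- A mechanism is efficient if its output is never Pareto dominated. -/
def Efficient {A : Type} (f : Profile A → Matching A) : Prop :=
  ∀ P, ¬ ∃ μ : Matching A, dominates P μ.1 (f P).1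

/-- Group strategy-proofness: no coalition `S` has a misreport making every member
weakly better off and some member strictly better off. -/
def GroupSP {A : Type} (f : Profile A → Matching A) : Prop :=
  ¬ ∃ (P P' : Profile A) (S : Set A),
      (∀ i, i ∉ S → P' i = P i) ∧
      (∀ i ∈ S, (f P').1 i = (f P).1 i ∨ (P i).1 ((f P').1 i) ((f P).1 i)) ∧
      (∃ i ∈ S, (P i).1 ((f P').1 i) ((f P).1 i))

/-- `b` is the top choice of preference `r`. -/
def TopChoice {A : Type} (r : Pref A) (b : A) : Prop := ∀ c, c ≠ b → r.1 b c

/-- The strict preference induced by a position (ranking) permutation `ρ`: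
`a` is preferred to `b` iff `a`'s position `ρ a` is smaller. -/
def prefOfPos {n : ℕ} (ρ : Fin n ≃ Fin n) : Pref (Fin n) :=
  ⟨fun a b => ρ a < ρ b, by
    refine { trichotomous := ?_, irrefl := ?_, trans := ?_ }
    · intro a b h1 h2
      exact ρ.injective (le_antisymm (not_lt.mp h2) (not_lt.mp h1))
    · intro a
      exact lt_irrefl _
    · intro a b c hab hbc
      exact lt_trans hab hbc⟩

/-- `μ` is efficient at `P`. -/
def EfficientAt {A : Type} (P : Profile A) (μ : Matching A) : Prop :=
  ¬ ∃ ν : Matching A, dominates P ν.1 μ.1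

/- The four matchings on three agents (0-indexed: agents 1,2,3 are 0,1,2). -/

/-- {(1,2),(3)} -/
def m12 : Matching (Fin 3) := ⟨⇑(Equiv.swap 0 1), fun _ => Equiv.swap_apply_self _ _ _⟩
/-- {(1),(2,3)} -/
def m23 : Matching (Fin 3) := ⟨⇑(Equiv.swap 1 2), fun _ => Equiv.swap_apply_self _ _ _⟩
/-- {(1,3),(2)} -/
def m13 : Matching (Fin 3) := ⟨⇑(Equiv.swap 0 2), fun _ => Equiv.swap_apply_self _ _ _⟩
/-- {(1),(2),(3)} -/
def mAllSingle : Matching (Fin 3) := ⟨id, fun _ => rfl⟩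

/-- The profile where every agent ranks `3 ≻ 1 ≻ 2`, i.e. `2 ≻ 0 ≻ 1`. -/
def Pstar : Profile (Fin 3) := fun _ => prefOfPos (finRotate 3)

/-- Agent 2's misreport `3 ≻ 2 ≻ 1`, i.e. `2 ≻ 1 ≻ 0`. -/
def devPref : Pref (Fin 3) := prefOfPos (Equiv.swap 0 2)


lemma Pstar_rel (i a b : Fin 3) : (Pstar i).1 a b ↔ finRotate 3 a < finRotate 3 b := Iff.rfl

lemma devPref_rel (a b : Fin 3) : devPref.1 a b ↔ Equiv.swap (0:Fin 3) 2 a < Equiv.swap (0:Fin 3) 2 b := Iff.rfl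

lemma classify (μ : Matching (Fin 3)) : μ = m12 ∨ μ = m23 ∨ μ = m13 ∨ μ = mAllSingle := by
  obtain ⟨g, hg⟩ := μ
  have h : g = ⇑(Equiv.swap (0:Fin 3) 1) ∨ g = ⇑(Equiv.swap (1:Fin 3) 2) ∨
      g = ⇑(Equiv.swap (0:Fin 3) 2) ∨ g = (id : Fin 3 → Fin 3) := by
    revert hg
    have : ∀ g : Fin 3 → Fin 3, (∀ x, g (g x) = x) → g = ⇑(Equiv.swap (0:Fin 3) 1) ∨
        g = ⇑(Equiv.swap (1:Fin 3) 2) ∨ g = ⇑(Equiv.swap (0:Fin 3) 2) ∨ g = (id : Fin 3 → Fin 3) := by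
      decide
    exact this g
  rcases h with h | h | h | h
  · exact Or.inl (Subtype.ext h)
  · exact Or.inr (Or.inl (Subtype.ext h))
  · exact Or.inr (Or.inr (Or.inl (Subtype.ext h)))
  · exact Or.inr (Or.inr (Or.inr (Subtype.ext h)))

/-- The mechanism selecting, among the matchings efficient at each profile, the one
with minimal index `R` (with `R` injective and `R` of {(1,2),(3)}, {(1),(2,3)},
{(1,3),(2)}, {(1),(2),(3)} equal to 1,2,3,4) is efficient but not group
strategy-proof: at the profile where everyone ranks `3 ≻ 1 ≻ 2` agent 2 is matched
with agent 1, while misreporting `3 ≻ 2 ≻ 1` gets agent 2 matched with agent 3,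
whom agent 2 truly prefers. -/
theorem stmt19 (R : Matching (Fin 3) → ℕ) (hR : Function.Injective R)
    (hR12 : R m12 = 1) (hR23 : R m23 = 2) (hR13 : R m13 = 3) (hRs : R mAllSingle = 4)
    (f : Profile (Fin 3) → Matching (Fin 3))
    (hf : ∀ P, EfficientAt P (f P) ∧ ∀ μ : Matching (Fin 3), EfficientAt P μ → R (f P) ≤ R μ) :
    Efficient f ∧ ¬ GroupSP f ∧
    (f Pstar).1 1 = 0 ∧
    (f (Function.update Pstar 1 devPref)).1 1 = 2 ∧
    (Pstar 1).1 2 0 := by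

  set P' := Function.update Pstar 1 devPref with hP'
  have hP'0 : P' 0 = Pstar 0 := Function.update_of_ne (by decide) _ _
  have hP'1 : P' 1 = devPref := Function.update_self _ _ _
  have hP'2 : P' 2 = Pstar 2 := Function.update_of_ne (by decide) _ _
  -- m12 is efficient at Pstar
  have eff12 : EfficientAt Pstar m12 := by
    rintro ⟨ν, hall, i, hstr⟩
    rcases classify ν with h | h | h | h <;> subst h
    · haveI := (Pstar i).2
      exact irrefl_of (Pstar i).1 _ hstr
    · have := hall 2
      rcases this with h | h
      · revert h; decide
      · rw [Pstar_rel] at h; revert h; decide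
    · have := hall 2
      rcases this with h | h
      · revert h; decide
      · rw [Pstar_rel] at h; revert h; decide
    · have := hall 1
      rcases this with h | h
      · revert h; decide
      · rw [Pstar_rel] at h; revert h; decide
  -- m23 is efficient at P'
  have eff23 : EfficientAt P' m23 := by
    rintro ⟨ν, hall, i, hstr⟩
    rcases classify ν with h | h | h | h <;> subst h
    · have := hall 1
      rw [hP'1] at this
      rcases this with h | h
      · revert h; decide
      · rw [devPref_rel] at h; revert h; decide
    · haveI := (P' i).2
      exact irrefl_of (P' i).1 _ hstr
    · have := hall 1
      rw [hP'1] at this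
      rcases this with h | h
      · revert h; decide
      · rw [devPref_rel] at h; revert h; decide
    · have := hall 1
      rw [hP'1] at this
      rcases this with h | h
      · revert h; decide
      · rw [devPref_rel] at h; revert h; decide
  -- m12 is NOT efficient at P': dominated by mAllSingle
  have notEff12 : ¬ EfficientAt P' m12 := by
    intro h
    apply h
    have c0 : (P' 0).1 (mAllSingle.1 0) (m12.1 0) := by rw [hP'0, Pstar_rel]; decide
    have c1 : mAllSingle.1 1 = m12.1 1 ∨ (P' 1).1 (mAllSingle.1 1) (m12.1 1) :=
      Or.inr (by rw [hP'1, devPref_rel]; decide)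
    have c2 : mAllSingle.1 2 = m12.1 2 ∨ (P' 2).1 (mAllSingle.1 2) (m12.1 2) :=
      Or.inl (by decide)
    refine ⟨mAllSingle, ⟨fun i => ?_, 0, c0⟩⟩
    fin_cases i
    · exact Or.inr c0
    · exact c1
    · exact c2
  -- f Pstar = m12
  have hfP : f Pstar = m12 := by
    have hle : R (f Pstar) ≤ 1 := hR12 ▸ (hf Pstar).2 m12 eff12
    rcases classify (f Pstar) with h | h | h | h
    · exact h
    · rw [h, hR23] at hle; omega
    · rw [h, hR13] at hle; omega
    · rw [h, hRs] at hle; omega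
  -- f P' = m23
  have hfP' : f P' = m23 := by
    have hle : R (f P') ≤ 2 := hR23 ▸ (hf P').2 m23 eff23
    rcases classify (f P') with h | h | h | h
    · exact absurd (h ▸ (hf P').1) notEff12
    · exact h
    · rw [h, hR13] at hle; omega
    · rw [h, hRs] at hle; omega
  have h21 : (f Pstar).1 1 = 0 := by rw [hfP]; decide
  have h23 : (f P').1 1 = 2 := by rw [hfP']; decide
  have hpref : (Pstar 1).1 2 0 := by rw [Pstar_rel]; decide
  refine ⟨fun P => (hf P).1, ?_, h21, h23, hpref⟩
  intro hgsp
  refine hgsp ⟨Pstar, P', {1},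
    fun i hi => Function.update_of_ne (by simpa using hi) _ _, ?_, 1, rfl, ?_⟩
  · intro i hi
    have hi1 : i = 1 := hi
    subst hi1
    right; rw [h21, h23]; exact hpref
  · rw [h21, h23]; exact hpref
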